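/- Semi-discrete Scharfetter-Gummel energy dissipation, Fokker-Planck case: suppose u_1,...,u_I : J → ℝ solve, on the open interval J, u_i'(t) + (1/Δx)(F_{i+1/2}(t) − F_{i−1/2}(t)) = 0 for i = 1,...,I, where F_{1/2} = F_{I+1/2} = 0 and, for 1 ≤ i ≤ I−1, F_{i+1/2}(t) = −(c_{i+1/2}(t)/Δx)[ exp(g(u_{i+1}(t)) − v_{i+1}) − exp(g(u_i(t)) − v_i) ] with nonnegative functions c_{i+1/2} : J → ℝ and fixed reals v_1,...,v_I. Then, writing x_i(t) = g(u_i(t)) − v_i, for every t ∈ J, (d/dt)[ Δx Σ_{i=1}^I ( G(u_i(t)) − u_i(t) v_i ) ] = −(1/Δx) Σ_{i=1}^{I−1} c_{i+1/2}(t) ( exp(x_{i+1}(t)) − exp(x_i(t)) ) ( x_{i+1}(t) − x_i(t) ), which is ≤ 0. -/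

import Mathlib

lemma abel_icc (a F : ℕ → ℝ) : ∀ n : ℕ, 1 ≤ n →
    ∑ i ∈ Finset.Icc 1 n, a i * (F i - F (i - 1)) =
      a n * F n - a 1 * F 0 + ∑ i ∈ Finset.Icc 1 (n - 1), (a i - a (i + 1)) * F i := by
  intro n
  induction n with
  | zero => omega
  | succ m ih =>
    intro _
    rcases Nat.eq_zero_or_pos m with hm | hm
    · subst hm; simp; ring
    · obtain ⟨k, rfl⟩ : ∃ k, m = k + 1 := ⟨m - 1, by omega⟩
      rw [Finset.sum_Icc_succ_top (by omega : 1 ≤ k + 1 + 1), ih (by omega)]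
      have h1 : k + 1 + 1 - 1 = (k + 1 - 1) + 1 := by omega
      rw [h1, Finset.sum_Icc_succ_top (by omega : 1 ≤ k + 1 - 1 + 1)]
      have h2 : k + 1 - 1 + 1 = k + 1 := by omega
      rw [h2]
      ring_nf

/-- semi-discrete Scharfetter-Gummel energy dissipation,
Fokker-Planck case. -/
theorem semidiscrete_scharfetter_gummel_energy_dissipation_FP
    (I : ℕ) (hI : 1 ≤ I) (Δx : ℝ) (hΔx : Δx = 1 / (I : ℝ))
    (J : Set ℝ) (hJopen : IsOpen J) (hJconn : J.OrdConnected)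
    (g G : ℝ → ℝ) (hG : ∀ x : ℝ, HasDerivAt G (g x) x)
    (u : ℕ → ℝ → ℝ) (c : ℕ → ℝ → ℝ) (v : ℕ → ℝ)
    (hc : ∀ i, ∀ t ∈ J, 0 ≤ c i t)
    (F : ℕ → ℝ → ℝ)
    (hF0 : ∀ t, F 0 t = 0) (hFI : ∀ t, F I t = 0)
    (hF : ∀ i ∈ Finset.Icc 1 (I - 1), ∀ t ∈ J,
      F i t = -(c i t / Δx) *
        (Real.exp (g (u (i + 1) t) - v (i + 1)) - Real.exp (g (u i t) - v i)))
    (hode : ∀ i ∈ Finset.Icc 1 I, ∀ t ∈ J,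
      HasDerivAt (u i) (-(1 / Δx) * (F i t - F (i - 1) t)) t) :
    ∀ t ∈ J,
      HasDerivAt
        (fun s => Δx * ∑ i ∈ Finset.Icc 1 I, (G (u i s) - u i s * v i))
        (-(1 / Δx) * ∑ i ∈ Finset.Icc 1 (I - 1),
          c i t * (Real.exp (g (u (i + 1) t) - v (i + 1)) - Real.exp (g (u i t) - v i))
            * ((g (u (i + 1) t) - v (i + 1)) - (g (u i t) - v i))) t
      ∧ -(1 / Δx) * ∑ i ∈ Finset.Icc 1 (I - 1),
          c i t * (Real.exp (g (u (i + 1) t) - v (i + 1)) - Real.exp (g (u i t) - v i))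
            * ((g (u (i + 1) t) - v (i + 1)) - (g (u i t) - v i)) ≤ 0 := by
  intro t ht
  have hΔxpos : 0 < Δx := by
    rw [hΔx]
    have : (0 : ℝ) < (I : ℝ) := by exact_mod_cast hI
    positivity
  have hΔxne : Δx ≠ 0 := ne_of_gt hΔxpos
  constructor
  · -- derivative of each summand
    have hterm : ∀ i ∈ Finset.Icc 1 I,
        HasDerivAt (fun s => G (u i s) - u i s * v i)
          ((g (u i t) - v i) * (-(1 / Δx) * (F i t - F (i - 1) t))) t := by
      intro i hi
      have hu := hode i hi t ht
      have h1 : HasDerivAt (fun s => G (u i s))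
          (g (u i t) * (-(1 / Δx) * (F i t - F (i - 1) t))) t :=
        (hG (u i t)).comp t hu
      have h2 : HasDerivAt (fun s => u i s * v i)
          ((-(1 / Δx) * (F i t - F (i - 1) t)) * v i) t := hu.mul_const (v i)
      have := h1.sub h2
      refine this.congr_deriv ?_
      ring
    have hsum : HasDerivAt (fun s => ∑ i ∈ Finset.Icc 1 I, (G (u i s) - u i s * v i))
        (∑ i ∈ Finset.Icc 1 I,
          (g (u i t) - v i) * (-(1 / Δx) * (F i t - F (i - 1) t))) t :=
      HasDerivAt.fun_sum hterm
    have hmul := hsum.const_mul Δx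
    refine hmul.congr_deriv ?_
    -- algebraic identity
    have key : ∑ i ∈ Finset.Icc 1 I,
        (g (u i t) - v i) * (-(1 / Δx) * (F i t - F (i - 1) t))
        = -(1 / Δx) * ∑ i ∈ Finset.Icc 1 I,
            (g (u i t) - v i) * (F i t - F (i - 1) t) := by
      rw [Finset.mul_sum]
      exact Finset.sum_congr rfl fun i _ => by ring
    rw [key]
    rw [abel_icc (fun i => g (u i t) - v i) (fun i => F i t) I hI]
    rw [hF0, hFI]
    have hsum2 : ∑ i ∈ Finset.Icc 1 (I - 1),
        ((g (u i t) - v i) - (g (u (i + 1) t) - v (i + 1))) * F i t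
        = ∑ i ∈ Finset.Icc 1 (I - 1),
            c i t * (Real.exp (g (u (i + 1) t) - v (i + 1)) - Real.exp (g (u i t) - v i))
              * ((g (u (i + 1) t) - v (i + 1)) - (g (u i t) - v i)) / Δx := by
      refine Finset.sum_congr rfl fun i hi => ?_
      rw [hF i hi t ht]
      field_simp
      ring
    rw [hsum2, ← Finset.sum_div]
    field_simp
    ring
  · -- nonpositivity
    have hS : 0 ≤ ∑ i ∈ Finset.Icc 1 (I - 1),
        c i t * (Real.exp (g (u (i + 1) t) - v (i + 1)) - Real.exp (g (u i t) - v i))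
          * ((g (u (i + 1) t) - v (i + 1)) - (g (u i t) - v i)) := by
      refine Finset.sum_nonneg fun i _ => ?_
      set a := g (u (i + 1) t) - v (i + 1)
      set b := g (u i t) - v i
      have hcc := hc i t ht
      rcases le_total b a with h | h
      · exact mul_nonneg (mul_nonneg hcc (by simp [Real.exp_le_exp, h, sub_nonneg]))
          (sub_nonneg.mpr h)
      · have h1 : c i t * (Real.exp a - Real.exp b) ≤ 0 :=
          mul_nonpos_of_nonneg_of_nonpos hcc (by simp [Real.exp_le_exp, h, sub_nonpos])
        have h2 : a - b ≤ 0 := sub_nonpos.mpr h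
        nlinarith
    have : 0 ≤ (1 / Δx) := by positivity
    nlinarith
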